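/- There is no binary systematic code of length n = d + k + 1, dimension k ≥ 3, and minimum distance d = 5. Equivalently, every binary systematic code with k ≥ 3 and d = 5 satisfies n ≥ d + k + 2 = ∑_{j=0}^{k-1} ⌈5/2^j⌉. -/

import Mathlib

open Finset

/-- `C` has minimum (Hamming) distance exactly `d`. -/
def minDistIs {n : ℕ} {A : Type*} [DecidableEq A] (C : Finset (Fin n → A)) (d : ℕ) : Prop :=
  (∀ x ∈ C, ∀ y ∈ C, x ≠ y → d ≤ hammingDist x y) ∧
    ∃ x ∈ C, ∃ y ∈ C, x ≠ y ∧ hammingDist x y = d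

/-- `C` is systematic: projection onto the first `k` coordinates is a bijection onto `A^k`. -/
def systematicOn {n k : ℕ} {A : Type*} (h : k ≤ n) (C : Finset (Fin n → A)) : Prop :=
  Set.BijOn (fun c (i : Fin k) => c (Fin.castLE h i)) (C : Set (Fin n → A)) Set.univ

/-- The Griesmer sum `∑_{j=0}^{k-1} ⌈d / q^j⌉`. -/
def griesmerSum (q d k : ℕ) : ℤ := ∑ j ∈ Finset.range k, ⌈(d : ℚ) / (q : ℚ) ^ j⌉

lemma fin2_ite : ∀ a b : ZMod 2,
    ((if a ≠ b then (1:ℤ) else 0))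
      = ((if a = 1 then (1:ℤ) else 0) - (if b = 1 then 1 else 0))^2 := by decide

lemma plotkin {S : Type*} [Fintype S] [DecidableEq S] (hS : Fintype.card S = 8)
    (v : S → Fin 10 → ZMod 2)
    (h : ∀ s t, s ≠ t → 6 ≤ hammingDist (v s) (v t)) : False := by
  classical
  set g : S → Fin 10 → ℤ := fun s i => if v s i = 1 then 1 else 0 with hg
  have key : ∀ s t, (hammingDist (v s) (v t) : ℤ)
      = ∑ i : Fin 10, (g s i - g t i)^2 := by
    intro s t
    rw [hammingDist, Finset.card_filter]
    push_cast
    refine Finset.sum_congr rfl fun i _ => ?_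
    simpa using fin2_ite (v s i) (v t i)
  have lower : (336:ℤ) ≤ ∑ s : S, ∑ t : S, (hammingDist (v s) (v t) : ℤ) := by
    have hrow : ∀ s : S, (42:ℤ) ≤ ∑ t : S, (hammingDist (v s) (v t) : ℤ) := by
      intro s
      have he : ∑ t : S, (hammingDist (v s) (v t) : ℤ)
          = ∑ t ∈ univ.erase s, (hammingDist (v s) (v t) : ℤ) := by
        rw [Finset.sum_erase]
        simp
      rw [he]
      calc (42:ℤ) = ∑ _t ∈ univ.erase s, (6:ℤ) := by
            rw [Finset.sum_const, Finset.card_erase_of_mem (mem_univ s), card_univ, hS]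
            norm_num
        _ ≤ _ := Finset.sum_le_sum fun t ht => by
            have hts : t ≠ s := (Finset.mem_erase.mp ht).1
            exact_mod_cast h s t hts.symm
    calc (336:ℤ) = ∑ _s : S, (42:ℤ) := by rw [Finset.sum_const, card_univ, hS]; norm_num
      _ ≤ _ := Finset.sum_le_sum fun s _ => hrow s
  have upper : ∑ s : S, ∑ t : S, (hammingDist (v s) (v t) : ℤ) ≤ 320 := by
    have per : ∀ i : Fin 10, ∑ s : S, ∑ t : S, (g s i - g t i)^2 ≤ 32 := by
      intro i
      have h01 : ∀ s, g s i ^ 2 = g s i := fun s => by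
        simp only [hg]; split <;> norm_num
      have hexp : ∑ s : S, ∑ t : S, (g s i - g t i)^2
          = 16 * (∑ s : S, g s i) - 2 * (∑ s : S, g s i)^2 := by
        have hst : ∀ s t : S, (g s i - g t i)^2
            = g s i ^ 2 - 2 * (g s i * g t i) + g t i ^ 2 := fun s t => by ring
        simp_rw [hst, Finset.sum_add_distrib, Finset.sum_sub_distrib, ← Finset.mul_sum,
          Finset.sum_const, card_univ, hS, h01, ← Finset.sum_mul, nsmul_eq_mul]
        rw [← Finset.mul_sum]
        push_cast
        ring
      rw [hexp]
      nlinarith [sq_nonneg ((∑ s : S, g s i) - 4)]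
    calc ∑ s : S, ∑ t : S, (hammingDist (v s) (v t) : ℤ)
        = ∑ s : S, ∑ i : Fin 10, ∑ t : S, (g s i - g t i)^2 := by
          simp_rw [key]
          exact Finset.sum_congr rfl fun s _ => by rw [Finset.sum_comm]
      _ = ∑ i : Fin 10, ∑ s : S, ∑ t : S, (g s i - g t i)^2 := by
          rw [Finset.sum_comm]
      _ ≤ ∑ _i : Fin 10, (32:ℤ) := Finset.sum_le_sum fun i _ => per i
      _ = 320 := by simp
  linarith

lemma fin2_val_ne : ∀ a b : Fin 2, a ≠ b → ((a.val : ZMod 2) ≠ (b.val : ZMod 2)) := by decide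

lemma zmod2_add_one : ∀ a b : ZMod 2, a + b = 1 → a ≠ b := by decide

lemma zmod2_ite_add : ∀ a b : ZMod 2, (if a ≠ b then (1 : ZMod 2) else 0) = a + b := by decide


def iotaF (k : ℕ) (j : Fin 9) : ℕ := if (j : ℕ) < 3 then (j : ℕ) else k + ((j : ℕ) - 3)

def phiF (k n : ℕ) (i : Fin n) : Fin 9 :=
  if h : (i : ℕ) < 3 then ⟨(i : ℕ), by omega⟩ else ⟨min (3 + ((i : ℕ) - k)) 8, by omega⟩

lemma iota_phi {k n : ℕ} (hk : 3 ≤ k) (hn : n ≤ k + 6) (i : Fin n)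
    (h : (i : ℕ) < 3 ∨ k ≤ (i : ℕ)) : iotaF k (phiF k n i) = (i : ℕ) := by
  have hi := i.2
  unfold iotaF phiF
  split_ifs <;> simp_all <;> omega

lemma phi_inj {k n : ℕ} (hk : 3 ≤ k) (hn : n ≤ k + 6) (i i' : Fin n)
    (h : (i : ℕ) < 3 ∨ k ≤ (i : ℕ)) (h' : (i' : ℕ) < 3 ∨ k ≤ (i' : ℕ))
    (he : phiF k n i = phiF k n i') : i = i' := by
  have hi := i.2
  have hi' := i'.2
  have hv := congrArg Fin.val he
  unfold phiF at hv
  apply Fin.ext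
  split_ifs at hv <;> simp_all <;> omega

theorem stmt11 {n k : ℕ}
    (C : Finset (Fin n → Fin 2)) (hk : 3 ≤ k) (hkn : k ≤ n)
    (hcard : C.card = 2 ^ k)
    (hsys : systematicOn hkn C)
    (hmin : minDistIs C 5) :
    n ≥ 5 + k + 2 := by
  by_contra hlt
  push_neg at hlt
  have hn6 : n ≤ k + 6 := by omega
  -- the 8 info vectors supported on the first 3 coordinates
  set S := (Fin 3 → Fin 2) with hSdef
  have hScard : Fintype.card S = 8 := by simp [hSdef]
  let u : S → (Fin k → Fin 2) := fun σ i => if h : (i : ℕ) < 3 then σ ⟨i, h⟩ else 0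
  have hu_inj : Function.Injective u := by
    intro σ τ hst
    funext j
    have h3k : (j : ℕ) < k := lt_of_lt_of_le j.2 hk
    have hj := congrFun hst ⟨(j : ℕ), h3k⟩
    simpa [u, j.2, Fin.eta] using hj
  -- choose codewords with those info parts
  have hex : ∀ σ : S, ∃ c, c ∈ C ∧ (fun i : Fin k => c (Fin.castLE hkn i)) = u σ := by
    intro σ
    rcases hsys.surjOn (Set.mem_univ (u σ)) with ⟨c, hc, hproj⟩
    exact ⟨c, hc, hproj⟩
  choose c hcC hcproj using hex
  have hcval : ∀ (σ : S) (i : Fin k), c σ (Fin.castLE hkn i) = u σ i :=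
    fun σ i => congrFun (hcproj σ) i
  have hc_ne : ∀ σ τ : S, σ ≠ τ → c σ ≠ c τ := by
    intro σ τ hst hc
    exact hst (hu_inj (((hcproj σ).symm.trans (by rw [hc])).trans (hcproj τ)))
  have hdist5 : ∀ σ τ : S, σ ≠ τ → 5 ≤ hammingDist (c σ) (c τ) :=
    fun σ τ hst => hmin.1 _ (hcC σ) _ (hcC τ) (hc_ne σ τ hst)
  -- codewords vanish on info coordinates 3..k-1
  have hzero : ∀ (σ : S) (i : Fin n), 3 ≤ (i : ℕ) → (i : ℕ) < k → c σ i = 0 := by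
    intro σ i h3 hik
    have := hcval σ ⟨(i : ℕ), hik⟩
    have hcast : Fin.castLE hkn (⟨(i : ℕ), hik⟩ : Fin k) = i := by
      apply Fin.ext; rfl
    rw [hcast] at this
    rw [this]
    simp [u, not_lt.mpr h3]
  -- the 9 relevant coordinates
  let w : S → Fin 9 → ZMod 2 := fun σ j =>
    if h : iotaF k j < n then ((c σ ⟨iotaF k j, h⟩).val : ZMod 2) else 0
  -- distances are preserved when passing to w
  have hw5 : ∀ σ τ : S, σ ≠ τ → 5 ≤ hammingDist (w σ) (w τ) := by
    intro σ τ hst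
    refine le_trans (hdist5 σ τ hst) ?_
    rw [hammingDist, hammingDist]
    apply Finset.card_le_card_of_injOn (phiF k n)
    · intro i hi
      simp only [Finset.mem_coe, Finset.mem_filter, Finset.mem_univ, true_and] at hi ⊢
      have hki : (i : ℕ) < 3 ∨ k ≤ (i : ℕ) := by
        by_contra hcon
        push_neg at hcon
        rw [hzero σ i hcon.1 hcon.2, hzero τ i hcon.1 hcon.2] at hi
        exact hi rfl
      have hιφ : iotaF k (phiF k n i) = (i : ℕ) := iota_phi hk hn6 i hki
      have hwφ : ∀ ρ : S, w ρ (phiF k n i) = ((c ρ i).val : ZMod 2) := by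
        intro ρ
        have hlt' : iotaF k (phiF k n i) < n := by rw [hιφ]; exact i.2
        show dite _ _ _ = _
        rw [dif_pos hlt']
        have heq : (⟨iotaF k (phiF k n i), hlt'⟩ : Fin n) = i := Fin.ext hιφ
        rw [heq]
      rw [hwφ σ, hwφ τ]
      exact fin2_val_ne _ _ hi
    · intro i hi i' hi' hee
      simp only [Finset.coe_filter, Set.mem_setOf_eq, Finset.mem_univ, true_and] at hi hi'
      have hki : (i : ℕ) < 3 ∨ k ≤ (i : ℕ) := by
        by_contra hcon; push_neg at hcon
        rw [hzero σ i hcon.1 hcon.2, hzero τ i hcon.1 hcon.2] at hi; exact hi rfl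
      have hki' : (i' : ℕ) < 3 ∨ k ≤ (i' : ℕ) := by
        by_contra hcon; push_neg at hcon
        rw [hzero σ i' hcon.1 hcon.2, hzero τ i' hcon.1 hcon.2] at hi'; exact hi' rfl
      exact phi_inj hk hn6 i i' hki hki' hee
  -- parity extension
  let p : S → ZMod 2 := fun σ => ∑ j : Fin 9, w σ j
  let v : S → Fin 10 → ZMod 2 := fun σ j =>
    if h : (j : ℕ) < 9 then w σ ⟨(j : ℕ), h⟩ else p σ
  have hvdist : ∀ σ τ : S, hammingDist (v σ) (v τ)
      = hammingDist (w σ) (w τ) + (if p σ ≠ p τ then 1 else 0) := by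
    intro σ τ
    rw [hammingDist, hammingDist, Finset.card_filter, Finset.card_filter,
      Fin.sum_univ_castSucc]
    show _ = (∑ j : Fin 9, if w σ j ≠ w τ j then 1 else 0) + _
    congr 1
  have hparity : ∀ σ τ : S, ((hammingDist (w σ) (w τ) : ℕ) : ZMod 2) = p σ + p τ := by
    intro σ τ
    rw [hammingDist, Finset.card_filter, Nat.cast_sum]
    have : ∀ j : Fin 9, (((if w σ j ≠ w τ j then 1 else 0 : ℕ)) : ZMod 2) = w σ j + w τ j := by
      intro j
      rw [apply_ite (Nat.cast : ℕ → ZMod 2)]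
      push_cast
      exact zmod2_ite_add _ _
    rw [Finset.sum_congr rfl fun j _ => this j, Finset.sum_add_distrib]
  have hv6 : ∀ σ τ : S, σ ≠ τ → 6 ≤ hammingDist (v σ) (v τ) := by
    intro σ τ hst
    rw [hvdist]
    by_cases h6 : 6 ≤ hammingDist (w σ) (w τ)
    · omega
    · have h5 : hammingDist (w σ) (w τ) = 5 := le_antisymm (by omega) (hw5 σ τ hst)
      have hodd : p σ ≠ p τ := by
        apply zmod2_add_one
        rw [← hparity σ τ, h5]
        decide
      rw [if_pos hodd]
      omega
  exact plotkin hScard v hv6
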